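/- Let p ≥ 1 and let A = S¹ × [0,1] be the closed annulus, where S¹ is the unit circle in ℂ. Set b_i = (exp(2πi i/p), 0) and c_i = (exp(2πi i/p), 1) for i = 0, …, p−1. Suppose σ is a bijection of {0, …, p−1} and γ_0, …, γ_{p−1} : [0,1] → A are injective paths with pairwise disjoint images, where γ_i runs from b_i to c_{σ(i)} and meets the boundary circles S¹ × {0, 1} exactly at its two endpoints. Then σ is a cyclic rotation: there exists an integer c such that σ(i) ≡ i + c (mod p) for every i. -/

import Mathlib

open Complex Real
open Set

set_option maxHeartbeats 1000000

section AnnulusAux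

lemma contOn_union_closed {α β : Type*} [TopologicalSpace α] [TopologicalSpace β]
    {f : α → β} {s t : Set α} (hs : IsClosed s) (ht : IsClosed t)
    (hfs : ContinuousOn f s) (hft : ContinuousOn f t) : ContinuousOn f (s ∪ t) := by
  intro x hx
  rw [ContinuousWithinAt, nhdsWithin_union]
  refine Filter.Tendsto.sup ?_ ?_
  · by_cases h : x ∈ s
    · exact hfs x h
    · exact continuousWithinAt_of_notMem_closure (by rwa [hs.closure_eq])
  · by_cases h : x ∈ t
    · exact hft x h
    · exact continuousWithinAt_of_notMem_closure (by rwa [ht.closure_eq])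

lemma slit_of_close {z w : ℂ} (hw : w ≠ 0) (h : dist z w < ‖w‖) :
    z / w ∈ Complex.slitPlane ∧ z ≠ 0 := by
  have hw' : 0 < ‖w‖ := by
    simpa [AbsoluteValue.pos_iff] using hw
  have hz : z ≠ 0 := by
    rintro rfl
    rw [Complex.dist_eq, zero_sub, norm_neg] at h
    exact absurd h (lt_irrefl _)
  constructor
  · have h1 : ‖z / w - 1‖ < 1 := by
      have : z / w - 1 = (z - w) / w := by field_simp
      rw [this, norm_div]
      rw [div_lt_one hw']
      simpa [Complex.dist_eq] using h
    refine Complex.mem_slitPlane_iff.2 (Or.inl ?_)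
    have hre : |(z / w - 1).re| ≤ ‖z / w - 1‖ := Complex.abs_re_le_norm _
    have : (z / w).re = 1 + (z / w - 1).re := by simp
    rw [this]
    have := abs_le.1 hre
    linarith
  · exact hz

/-- Existence of a continuous logarithm along a (extended) path on `[0,1]`. -/
lemma exists_clog_path (f : ℝ → ℂ) (hf : Continuous f)
    (h0 : ∀ t ∈ Set.Icc (0:ℝ) 1, f t ≠ 0) :
    ∃ L : ℝ → ℂ, ContinuousOn L (Set.Icc 0 1) ∧
      ∀ t ∈ Set.Icc (0:ℝ) 1, Complex.exp (L t) = f t := by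
  -- minimum modulus
  obtain ⟨t₀, ht₀, hmin'⟩ := (isCompact_Icc (a := (0:ℝ)) (b := 1)).exists_isMinOn ⟨0, by norm_num⟩
    (hf.norm.continuousOn (s := Set.Icc (0:ℝ) 1))
  have hmin : ∀ t ∈ Set.Icc (0:ℝ) 1, ‖f t₀‖ ≤ ‖f t‖ := fun t ht => hmin' ht
  set m : ℝ := ‖f t₀‖ with hm_def
  have hm : 0 < m := by
    simpa [hm_def, norm_pos_iff] using h0 t₀ ht₀
  -- uniform continuity
  have UC := (isCompact_Icc (a := (0:ℝ)) (b := 1)).uniformContinuousOn_of_continuous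
    hf.continuousOn
  obtain ⟨δ, hδ, Hδ⟩ := (Metric.uniformContinuousOn_iff).1 UC m hm
  set η : ℝ := δ / 2 with hη_def
  have hηpos : 0 < η := by positivity
  -- induction on strips
  have main : ∀ k : ℕ, ∃ L : ℝ → ℂ, ContinuousOn L (Set.Icc 0 (min (k * η) 1)) ∧
      ∀ t ∈ Set.Icc (0:ℝ) (min (k * η) 1), Complex.exp (L t) = f t := by
    intro k
    induction k with
    | zero =>
      refine ⟨fun _ => Complex.log (f 0), continuousOn_const, ?_⟩
      intro t ht
      simp only [Nat.cast_zero, zero_mul, min_eq_left (zero_le_one)] at ht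
      rw [Set.Icc_self, Set.mem_singleton_iff] at ht
      subst ht
      exact Complex.exp_log (h0 0 ⟨le_refl _, zero_le_one⟩)
    | succ k ih =>
      obtain ⟨L, hLc, hLe⟩ := ih
      set b : ℝ := min (k * η) 1 with hb_def
      set b' : ℝ := min ((k + 1 : ℕ) * η) 1 with hb'_def
      have hb0 : 0 ≤ b := le_min (by positivity) zero_le_one
      have hb1 : b ≤ 1 := min_le_right _ _
      have hbb' : b ≤ b' := by
        apply le_min _ hb1
        calc b ≤ (k:ℝ) * η := min_le_left _ _
        _ ≤ (k+1:ℕ) * η := by push_cast; nlinarith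
      have hb'1 : b' ≤ 1 := min_le_right _ _
      have hstep : b' - b ≤ η := by
        rw [hb_def, hb'_def]
        rcases le_total ((k:ℝ) * η) 1 with h | h
        · rcases le_total (((k:ℕ)+1:ℝ) * η) 1 with h' | h'
          · rw [min_eq_left h, min_eq_left (by push_cast at h' ⊢; linarith)]
            push_cast; nlinarith
          · rw [min_eq_left h, min_eq_right (by push_cast at h' ⊢; linarith)]
            push_cast at h' ⊢; nlinarith
        · rw [min_eq_right h, min_eq_right (by push_cast; nlinarith)]
          linarith
      have hfb : f b ≠ 0 := h0 b ⟨hb0, hb1⟩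
      have hclose : ∀ t ∈ Set.Icc b b', dist (f t) (f b) < ‖f b‖ := by
        intro t ht
        have ht1 : t ∈ Set.Icc (0:ℝ) 1 := ⟨le_trans hb0 ht.1, le_trans ht.2 hb'1⟩
        have hd : dist t b < δ := by
          rw [Real.dist_eq, _root_.abs_of_nonneg (by linarith [ht.1])]
          have := ht.2
          rw [hη_def] at hstep
          linarith
        have h1 : dist (f t) (f b) < m := Hδ t ht1 b ⟨hb0, hb1⟩ hd
        have h2 : m ≤ ‖f b‖ := hmin b ⟨hb0, hb1⟩
        calc dist (f t) (f b) < m := h1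
        _ ≤ ‖f b‖ := h2
      refine ⟨fun t => if t ≤ b then L t else L b + Complex.log (f t / f b), ?_, ?_⟩
      · have hdecomp : Set.Icc (0:ℝ) b' = Set.Icc 0 b ∪ Set.Icc b b' :=
          (Set.Icc_union_Icc_eq_Icc hb0 hbb').symm
        rw [hdecomp]
        apply contOn_union_closed isClosed_Icc isClosed_Icc
        · apply ContinuousOn.congr hLc
          intro t ht
          simp [ht.2]
        · have hform : ContinuousOn (fun t => L b + Complex.log (f t / f b)) (Set.Icc b b') := by
            apply ContinuousOn.add continuousOn_const
            apply ContinuousOn.clog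
            · exact (hf.continuousOn).div continuousOn_const (fun t ht => hfb)
            · intro t ht
              exact (slit_of_close hfb (hclose t ht)).1
          apply ContinuousOn.congr hform
          intro t ht
          by_cases h : t ≤ b
          · have : t = b := le_antisymm h ht.1
            subst this
            simp [div_self hfb, Complex.log_one]
          · simp [h]
      · intro t ht
        by_cases h : t ≤ b
        · simpa [h] using hLe t ⟨ht.1, h⟩
        · have htb : t ∈ Set.Icc b b' := ⟨le_of_not_ge h, ht.2⟩
          have hft : f t ≠ 0 := (slit_of_close hfb (hclose t htb)).2
          simp only [h, if_false]
          rw [Complex.exp_add, hLe b ⟨hb0, le_refl _⟩,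
            Complex.exp_log (div_ne_zero hft hfb)]
          field_simp
  obtain ⟨k, hk⟩ := exists_nat_ge (1 / η)
  obtain ⟨L, hLc, hLe⟩ := main k
  have : min ((k:ℝ) * η) 1 = 1 := by
    rw [min_eq_right]
    rw [div_le_iff₀ hηpos] at hk
    linarith
  rw [this] at hLc hLe
  exact ⟨L, hLc, hLe⟩

/-- Existence of a continuous logarithm on the unit square. -/
lemma exists_clog_square (f : ℝ × ℝ → ℂ) (hf : Continuous f)
    (h0 : ∀ q ∈ (Set.Icc (0:ℝ) 1) ×ˢ (Set.Icc (0:ℝ) 1), f q ≠ 0) :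
    ∃ L : ℝ × ℝ → ℂ, ContinuousOn L ((Set.Icc (0:ℝ) 1) ×ˢ (Set.Icc (0:ℝ) 1)) ∧
      ∀ q ∈ (Set.Icc (0:ℝ) 1) ×ˢ (Set.Icc (0:ℝ) 1), Complex.exp (L q) = f q := by
  have hQcomp : IsCompact ((Set.Icc (0:ℝ) 1) ×ˢ (Set.Icc (0:ℝ) 1)) :=
    isCompact_Icc.prod isCompact_Icc
  obtain ⟨q₀, hq₀, hmin'⟩ := hQcomp.exists_isMinOn
    ⟨((0:ℝ),(0:ℝ)), Set.mk_mem_prod ⟨le_refl _, zero_le_one⟩ ⟨le_refl _, zero_le_one⟩⟩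
    (hf.norm.continuousOn (s := (Set.Icc (0:ℝ) 1) ×ˢ (Set.Icc (0:ℝ) 1)))
  have hmin : ∀ q ∈ (Set.Icc (0:ℝ) 1) ×ˢ (Set.Icc (0:ℝ) 1), ‖f q₀‖ ≤ ‖f q‖ :=
    fun q hq => hmin' hq
  set m : ℝ := ‖f q₀‖ with hm_def
  have hm : 0 < m := by simpa [hm_def, norm_pos_iff] using h0 q₀ hq₀
  have UC := hQcomp.uniformContinuousOn_of_continuous hf.continuousOn
  obtain ⟨δ, hδ, Hδ⟩ := (Metric.uniformContinuousOn_iff).1 UC m hm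
  set η : ℝ := δ / 2 with hη_def
  have hηpos : 0 < η := by positivity
  -- base: bottom edge
  obtain ⟨L0, hL0c, hL0e⟩ := exists_clog_path (fun t => f (t, 0))
    (hf.comp (continuous_id.prodMk continuous_const))
    (fun t ht => h0 (t, 0) ⟨ht, by norm_num⟩)
  have main : ∀ k : ℕ, ∃ L : ℝ × ℝ → ℂ,
      ContinuousOn L ((Set.Icc (0:ℝ) 1) ×ˢ (Set.Icc 0 (min (k * η) 1))) ∧
      ∀ q ∈ (Set.Icc (0:ℝ) 1) ×ˢ (Set.Icc (0:ℝ) (min (k * η) 1)), Complex.exp (L q) = f q := by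
    intro k
    induction k with
    | zero =>
      refine ⟨fun q => L0 q.1, ?_, ?_⟩
      · simp only [Nat.cast_zero, zero_mul, min_eq_left (zero_le_one)]
        exact hL0c.comp continuous_fst.continuousOn (fun q hq => hq.1)
      · intro q hq
        simp only [Nat.cast_zero, zero_mul, min_eq_left (zero_le_one)] at hq
        have h2 : q.2 = 0 := by
          have := hq.2
          rw [Set.Icc_self, Set.mem_singleton_iff] at this
          exact this
        have hqe : q = (q.1, 0) := by rw [← h2]
        rw [hqe]
        exact hL0e q.1 hq.1
    | succ k ih =>
      obtain ⟨L, hLc, hLe⟩ := ih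
      set b : ℝ := min (k * η) 1 with hb_def
      set b' : ℝ := min ((k + 1 : ℕ) * η) 1 with hb'_def
      have hb0 : 0 ≤ b := le_min (by positivity) zero_le_one
      have hb1 : b ≤ 1 := min_le_right _ _
      have hbb' : b ≤ b' := by
        apply le_min _ hb1
        calc b ≤ (k:ℝ) * η := min_le_left _ _
        _ ≤ (k+1:ℕ) * η := by push_cast; nlinarith
      have hb'1 : b' ≤ 1 := min_le_right _ _
      have hstep : b' - b ≤ η := by
        rw [hb_def, hb'_def]
        rcases le_total ((k:ℝ) * η) 1 with h | h
        · rcases le_total (((k:ℕ)+1:ℝ) * η) 1 with h' | h'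
          · rw [min_eq_left h, min_eq_left (by push_cast at h' ⊢; linarith)]
            push_cast; nlinarith
          · rw [min_eq_left h, min_eq_right (by push_cast at h' ⊢; linarith)]
            push_cast at h' ⊢; nlinarith
        · rw [min_eq_right h, min_eq_right (by push_cast; nlinarith)]
          linarith
      have hfb : ∀ x ∈ Set.Icc (0:ℝ) 1, f (x, b) ≠ 0 := fun x hx => h0 (x, b) ⟨hx, hb0, hb1⟩
      have hclose : ∀ q ∈ (Set.Icc (0:ℝ) 1) ×ˢ (Set.Icc b b'),
          dist (f q) (f (q.1, b)) < ‖f (q.1, b)‖ := by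
        rintro ⟨x, y⟩ ⟨hx, hy⟩
        have hyIcc : y ∈ Set.Icc (0:ℝ) 1 := ⟨le_trans hb0 hy.1, le_trans hy.2 hb'1⟩
        have hd : dist ((x,y) : ℝ × ℝ) (x, b) < δ := by
          rw [Prod.dist_eq]
          simp only [dist_self]
          rw [max_eq_right dist_nonneg, Real.dist_eq,
            _root_.abs_of_nonneg (by linarith [hy.1])]
          rw [hη_def] at hstep
          have := hy.2
          linarith
        have h1 : dist (f (x,y)) (f (x, b)) < m :=
          Hδ (x,y) ⟨hx, hyIcc⟩ (x, b) ⟨hx, hb0, hb1⟩ hd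
        calc dist (f (x,y)) (f (x, b)) < m := h1
        _ ≤ ‖f (x, b)‖ := hmin (x, b) ⟨hx, hb0, hb1⟩
      refine ⟨fun q => if q.2 ≤ b then L q else L (q.1, b) +
        Complex.log (f q / f (q.1, b)), ?_, ?_⟩
      · have hdecomp : (Set.Icc (0:ℝ) 1) ×ˢ (Set.Icc (0:ℝ) b') =
            ((Set.Icc (0:ℝ) 1) ×ˢ (Set.Icc (0:ℝ) b)) ∪
            ((Set.Icc (0:ℝ) 1) ×ˢ (Set.Icc b b')) := by
          rw [← Set.prod_union, Set.Icc_union_Icc_eq_Icc hb0 hbb']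
        rw [hdecomp]
        apply contOn_union_closed (isClosed_Icc.prod isClosed_Icc)
          (isClosed_Icc.prod isClosed_Icc)
        · apply ContinuousOn.congr hLc
          rintro ⟨x, y⟩ ⟨hx, hy⟩
          simp [hy.2]
        · have hcomp : ContinuousOn (fun q : ℝ × ℝ => L (q.1, b))
              ((Set.Icc (0:ℝ) 1) ×ˢ (Set.Icc b b')) := by
            apply hLc.comp (continuous_fst.prodMk continuous_const).continuousOn
            rintro ⟨x, y⟩ ⟨hx, hy⟩
            exact ⟨hx, hb0, le_refl _⟩
          have hform : ContinuousOn (fun q : ℝ × ℝ => L (q.1, b) +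
              Complex.log (f q / f (q.1, b))) ((Set.Icc (0:ℝ) 1) ×ˢ (Set.Icc b b')) := by
            apply hcomp.add
            apply ContinuousOn.clog
            · exact (hf.continuousOn).div
                ((hf.comp (continuous_fst.prodMk continuous_const)).continuousOn)
                (fun q hq => hfb q.1 hq.1)
            · intro q hq
              exact (slit_of_close (hfb q.1 hq.1) (hclose q hq)).1
          apply ContinuousOn.congr hform
          rintro ⟨x, y⟩ ⟨hx, hy⟩
          by_cases h : y ≤ b
          · have : y = b := le_antisymm h hy.1
            subst this
            simp [div_self (hfb x hx), Complex.log_one]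
          · simp [h]
      · rintro ⟨x, y⟩ ⟨hx, hy⟩
        by_cases h : y ≤ b
        · simpa [h] using hLe (x, y) ⟨hx, hy.1, h⟩
        · have hyb : ((x, y) : ℝ × ℝ) ∈ (Set.Icc (0:ℝ) 1) ×ˢ (Set.Icc b b') :=
            ⟨hx, le_of_not_ge h, hy.2⟩
          have hcl := hclose (x, y) hyb
          have hft : f (x, y) ≠ 0 := (slit_of_close (hfb x hx) hcl).2
          simp only [h, if_false]
          rw [Complex.exp_add, hLe (x, b) ⟨hx, hb0, le_refl _⟩,
            Complex.exp_log (div_ne_zero hft (hfb x hx))]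
          rw [mul_comm]
          exact div_mul_cancel₀ _ (hfb x hx)
  obtain ⟨k, hk⟩ := exists_nat_ge (1 / η)
  obtain ⟨L, hLc, hLe⟩ := main k
  have hone : min ((k:ℝ) * η) 1 = 1 := by
    rw [min_eq_right]
    rw [div_le_iff₀ hηpos] at hk
    linarith
  rw [hone] at hLc hLe
  exact ⟨L, hLc, hLe⟩

lemma exp_real_eq {a b : ℝ} (h : Complex.exp ((a:ℂ) * I) = Complex.exp ((b:ℂ) * I)) :
    ∃ n : ℤ, a = b + 2 * π * n := by
  have h1 : Complex.exp ((a:ℂ) * I - (b:ℂ) * I) = 1 := by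
    rw [Complex.exp_sub, h, div_self (Complex.exp_ne_zero _)]
  rw [Complex.exp_eq_one_iff] at h1
  obtain ⟨n, hn⟩ := h1
  refine ⟨n, ?_⟩
  have h2 := congrArg Complex.im hn
  simp only [← sub_mul, mul_comm, Complex.mul_im, Complex.I_re, Complex.I_im] at h2
  push_cast at h2
  simp at h2
  linarith [h2]

lemma const_2pi_int {D : Set (ℝ × ℝ)} (hD : IsPreconnected D) {v : ℝ × ℝ → ℝ}
    (hv : ContinuousOn v D) (hint : ∀ q ∈ D, ∃ n : ℤ, v q = 2 * π * n)
    {a b : ℝ × ℝ} (ha : a ∈ D) (hb : b ∈ D) : v a = v b := by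
  have key : ∀ x ∈ D, ∀ y ∈ D, ¬ (v x < v y) := by
    intro x hx y hy hlt
    obtain ⟨nx, hnx⟩ := hint x hx
    obtain ⟨ny, hny⟩ := hint y hy
    have hn : nx < ny := by
      by_contra hc
      push_neg at hc
      have : (ny:ℝ) ≤ nx := Int.cast_le.2 hc
      nlinarith [Real.pi_pos]
    have hmem : v x + π ∈ Set.Icc (v x) (v y) := by
      constructor
      · linarith [Real.pi_pos]
      · have : (nx:ℝ) + 1 ≤ ny := by exact_mod_cast hn
        nlinarith [Real.pi_pos]
    obtain ⟨q, hq, hvq⟩ := hD.intermediate_value hx hy hv hmem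
    obtain ⟨n, hn'⟩ := hint q hq
    rw [hn', hnx] at hvq
    have : (2 * n : ℝ) = 2 * nx + 1 := by
      have hz : (2 * (n:ℝ) - 2 * nx - 1) * π = 0 := by linarith
      rcases mul_eq_zero.mp hz with h' | h'
      · linarith
      · exact absurd h' Real.pi_ne_zero
    have : (2 * n : ℤ) = 2 * nx + 1 := by exact_mod_cast this
    omega
  rcases lt_trichotomy (v a) (v b) with h | h | h
  · exact absurd h (key a ha b hb)
  · exact h
  · exact absurd h (key b hb a ha)

lemma one_sub_exp_pos (u : ℝ) :
    (1 : ℂ) - Complex.exp ((u:ℂ) * I) =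
      ((2 * Real.sin (u/2) : ℝ) : ℂ) *
        (((Real.cos (u/2 - π/2) : ℝ) : ℂ) + ((Real.sin (u/2 - π/2) : ℝ) : ℂ) * I) := by
  have hs : Real.sin (u/2 - π/2) = - Real.cos (u/2) := Real.sin_sub_pi_div_two _
  have hc : Real.cos (u/2 - π/2) = Real.sin (u/2) := Real.cos_sub_pi_div_two _
  have hcu : Real.cos u = 1 - 2 * Real.sin (u/2) ^ 2 := by
    have h1 : Real.cos (2 * (u/2)) = 1 - 2 * Real.sin (u/2) ^ 2 := by
      rw [Real.cos_two_mul']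
      have := Real.sin_sq_add_cos_sq (u/2)
      nlinarith
    have h2 : 2 * (u/2) = u := by ring
    rwa [h2] at h1
  have hsu : Real.sin u = 2 * Real.sin (u/2) * Real.cos (u/2) := by
    have h1 := Real.sin_two_mul (u/2)
    have h2 : 2 * (u/2) = u := by ring
    rwa [h2] at h1
  rw [Complex.exp_mul_I, ← Complex.ofReal_cos, ← Complex.ofReal_sin]
  apply Complex.ext <;>
    simp only [Complex.sub_re, Complex.sub_im, Complex.one_re, Complex.one_im,
      Complex.add_re, Complex.add_im, Complex.mul_re, Complex.mul_im,
      Complex.I_re, Complex.I_im, Complex.ofReal_re, Complex.ofReal_im] <;>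
    simp only [hc, hs, hcu, hsu] <;> ring

lemma one_sub_exp_neg (u : ℝ) :
    (1 : ℂ) - Complex.exp (-((u:ℂ) * I)) =
      ((2 * Real.sin (u/2) : ℝ) : ℂ) *
        (((Real.cos (π/2 - u/2) : ℝ) : ℂ) + ((Real.sin (π/2 - u/2) : ℝ) : ℂ) * I) := by
  have hs : Real.sin (π/2 - u/2) = Real.cos (u/2) := Real.sin_pi_div_two_sub _
  have hc : Real.cos (π/2 - u/2) = Real.sin (u/2) := Real.cos_pi_div_two_sub _
  have hcu : Real.cos u = 1 - 2 * Real.sin (u/2) ^ 2 := by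
    have h1 : Real.cos (2 * (u/2)) = 1 - 2 * Real.sin (u/2) ^ 2 := by
      rw [Real.cos_two_mul']
      have := Real.sin_sq_add_cos_sq (u/2)
      nlinarith
    have h2 : 2 * (u/2) = u := by ring
    rwa [h2] at h1
  have hsu : Real.sin u = 2 * Real.sin (u/2) * Real.cos (u/2) := by
    have h1 := Real.sin_two_mul (u/2)
    have h2 : 2 * (u/2) = u := by ring
    rwa [h2] at h1
  have hneg : -((u:ℂ) * I) = ((-u : ℝ) : ℂ) * I := by push_cast; ring
  rw [hneg, Complex.exp_mul_I, ← Complex.ofReal_cos, ← Complex.ofReal_sin]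
  rw [Real.cos_neg, Real.sin_neg]
  apply Complex.ext <;>
    simp only [Complex.sub_re, Complex.sub_im, Complex.one_re, Complex.one_im,
      Complex.add_re, Complex.add_im, Complex.mul_re, Complex.mul_im,
      Complex.I_re, Complex.I_im, Complex.ofReal_re, Complex.ofReal_im,
      Complex.neg_re, Complex.neg_im] <;>
    simp only [hc, hs, hcu, hsu] <;> ring

/-- The key corner computation: for `g` not a multiple of `2π`,
`(g + arg (1 - exp (-g I))) - (π + arg (-(exp (g I) - 1))) = 2π⌊g/2π⌋`. -/
lemma corner_eq (g : ℝ) (hg : ∀ n : ℤ, g ≠ 2 * π * n) :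
    (g + Complex.arg (1 - Complex.exp (-((g:ℂ) * I)))) -
      (π + Complex.arg (-(Complex.exp ((g:ℂ) * I) - 1))) = 2 * π * ⌊g / (2 * π)⌋ := by
  have h2pi : (0:ℝ) < 2 * π := by positivity
  set n : ℤ := ⌊g / (2 * π)⌋ with hn_def
  set u : ℝ := g - 2 * π * n with hu_def
  have hu0 : 0 < u := by
    have h1 : (n:ℝ) ≤ g / (2 * π) := Int.floor_le _
    have h2 : 0 ≤ u := by
      rw [hu_def]
      rw [le_div_iff₀ h2pi] at h1
      linarith
    rcases h2.lt_or_eq with h | h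
    · exact h
    · exact absurd (by rw [hu_def] at h; linarith : g = 2 * π * n) (hg n)
  have hu2 : u < 2 * π := by
    have h1 : g / (2 * π) < n + 1 := Int.lt_floor_add_one _
    rw [div_lt_iff₀ h2pi] at h1
    rw [hu_def]
    linarith
  have hgu : g = u + 2 * π * n := by rw [hu_def]; ring
  -- exp identities
  have hexpg : Complex.exp ((g:ℂ) * I) = Complex.exp ((u:ℂ) * I) := by
    rw [hgu]
    push_cast
    rw [add_mul, Complex.exp_add]
    have : ((2:ℂ) * π * n) * I = n * (2 * π * I) := by ring
    rw [this, Complex.exp_int_mul_two_pi_mul_I, mul_one]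
  have hexpgneg : Complex.exp (-((g:ℂ) * I)) = Complex.exp (-((u:ℂ) * I)) := by
    rw [hgu]
    push_cast
    rw [show -(((u:ℂ) + 2 * π * n) * I) = -((u:ℂ) * I) + ((-n : ℤ) : ℂ) * (2 * π * I) by
      push_cast; ring]
    rw [Complex.exp_add, Complex.exp_int_mul_two_pi_mul_I, mul_one]
  have hspos : 0 < 2 * Real.sin (u/2) := by
    have : 0 < Real.sin (u/2) := Real.sin_pos_of_pos_of_lt_pi (by linarith) (by linarith)
    linarith
  -- the A part
  have hA : Complex.arg (-(Complex.exp ((g:ℂ) * I) - 1)) = u/2 - π/2 := by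
    rw [hexpg, neg_sub, one_sub_exp_pos u, Complex.arg_real_mul _ hspos,
      Complex.ofReal_cos, Complex.ofReal_sin, Complex.arg_cos_add_sin_mul_I]
    constructor
    · linarith [Real.pi_pos]
    · linarith [Real.pi_pos]
  -- the B part
  have hB : Complex.arg (1 - Complex.exp (-((g:ℂ) * I))) = π/2 - u/2 := by
    rw [hexpgneg, one_sub_exp_neg u, Complex.arg_real_mul _ hspos,
      Complex.ofReal_cos, Complex.ofReal_sin, Complex.arg_cos_add_sin_mul_I]
    constructor
    · linarith [Real.pi_pos]
    · linarith [Real.pi_pos]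
  rw [hA, hB, hgu]
  ring

lemma floor_nat_div {p a b : ℕ} (ha : a < p) (hb : b < p) (hne : a ≠ b) :
    ⌊(((b:ℝ) - (a:ℝ)) / (p:ℝ))⌋ = if a < b then 0 else -1 := by
  have hp : 0 < p := by omega
  have hpR : (0:ℝ) < p := by exact_mod_cast hp
  rcases lt_or_gt_of_ne hne with h | h
  · rw [if_pos h]
    rw [Int.floor_eq_iff]
    constructor
    · push_cast
      apply div_nonneg _ (le_of_lt hpR)
      have : (a:ℝ) < b := by exact_mod_cast h
      linarith
    · push_cast
      rw [zero_add, div_lt_one hpR]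
      have : (b:ℝ) < p := by exact_mod_cast hb
      have : (0:ℝ) ≤ a := by positivity
      linarith [show (b:ℝ) < p by exact_mod_cast hb]
  · rw [if_neg (by omega)]
    rw [Int.floor_eq_iff]
    constructor
    · push_cast
      rw [neg_le, ← neg_div, neg_sub, div_le_one hpR]
      have : (a:ℝ) < p := by exact_mod_cast ha
      have : (0:ℝ) ≤ b := by positivity
      linarith [show (a:ℝ) < p by exact_mod_cast ha]
    · push_cast
      rw [neg_add_cancel]
      apply div_neg_of_neg_of_pos _ hpR
      have : (b:ℝ) < a := by exact_mod_cast h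
      linarith


/-- The core separation estimate: two disjoint arcs crossing the annulus have the same
total winding offset, measured by floors of lifted angle differences. -/
lemma core_floor (θ₁ θ₂ y₁ y₂ : ℝ → ℝ)
    (hθ₁ : Continuous θ₁) (hθ₂ : Continuous θ₂)
    (hy₁ : Continuous y₁) (hy₂ : Continuous y₂)
    (hy₁m : ∀ t ∈ Set.Icc (0:ℝ) 1, y₁ t ∈ Set.Icc (0:ℝ) 1)
    (hy₂m : ∀ t ∈ Set.Icc (0:ℝ) 1, y₂ t ∈ Set.Icc (0:ℝ) 1)
    (hy₁0 : y₁ 0 = 0) (hy₁1 : y₁ 1 = 1) (hy₂0 : y₂ 0 = 0) (hy₂1 : y₂ 1 = 1)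
    (hdisj : ∀ t ∈ Set.Icc (0:ℝ) 1, ∀ s ∈ Set.Icc (0:ℝ) 1,
      ¬ (y₂ s = y₁ t ∧ ∃ n : ℤ, θ₂ s - θ₁ t = 2 * π * n)) :
    ⌊(θ₂ 0 - θ₁ 0) / (2 * π)⌋ = ⌊(θ₂ 1 - θ₁ 1) / (2 * π)⌋ := by
  have h2pi : (0:ℝ) < 2 * π := by positivity
  set w : ℝ × ℝ → ℂ :=
    fun q => ((y₂ q.2 - y₁ q.1 : ℝ) : ℂ) + ((θ₂ q.2 - θ₁ q.1 : ℝ) : ℂ) * I with hw_def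
  have hwcont : Continuous w := by
    apply Continuous.add
    · exact Complex.continuous_ofReal.comp ((hy₂.comp continuous_snd).sub (hy₁.comp continuous_fst))
    · exact (Complex.continuous_ofReal.comp
        ((hθ₂.comp continuous_snd).sub (hθ₁.comp continuous_fst))).mul continuous_const
  have hw_re : ∀ q, (w q).re = y₂ q.2 - y₁ q.1 := by intro q; simp [hw_def]
  have hw_im : ∀ q, (w q).im = θ₂ q.2 - θ₁ q.1 := by intro q; simp [hw_def]
  set F : ℝ × ℝ → ℂ := fun q => Complex.exp (w q) - 1 with hF_def
  have hFcont : Continuous F := (hwcont.cexp).sub continuous_const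
  have hFne : ∀ q ∈ (Set.Icc (0:ℝ) 1) ×ˢ (Set.Icc (0:ℝ) 1), F q ≠ 0 := by
    intro q hq h
    rw [hF_def] at h
    have h1 : Complex.exp (w q) = 1 := by
      have := sub_eq_zero.mp h; exact this
    rw [Complex.exp_eq_one_iff] at h1
    obtain ⟨n, hn⟩ := h1
    apply hdisj q.1 hq.1 q.2 hq.2
    constructor
    · have := congrArg Complex.re hn
      rw [hw_re] at this
      simpa using sub_eq_zero.mp (by simpa using this)
    · refine ⟨n, ?_⟩
      have := congrArg Complex.im hn
      rw [hw_im] at this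
      simpa [mul_comm] using this
  obtain ⟨L, hLc, hLe⟩ := exists_clog_square F hFcont hFne
  -- lower boundary
  set D : Set (ℝ × ℝ) :=
    (Set.Icc (0:ℝ) 1 ×ˢ Set.Icc (0:ℝ) 0) ∪ (Set.Icc (1:ℝ) 1 ×ˢ Set.Icc (0:ℝ) 1) with hD_def
  have hDQ : D ⊆ (Set.Icc (0:ℝ) 1) ×ˢ (Set.Icc (0:ℝ) 1) := by
    rintro ⟨x, y⟩ (⟨hx, hy⟩ | ⟨hx, hy⟩)
    · exact ⟨hx, hy.1, le_trans hy.2 zero_le_one⟩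
    · exact ⟨⟨le_trans zero_le_one hx.1, hx.2⟩, hy⟩
  have hDpre : IsPreconnected D := by
    apply IsPreconnected.union ((1:ℝ), (0:ℝ))
    · exact ⟨⟨zero_le_one, le_refl _⟩, le_refl _, le_refl _⟩
    · exact ⟨⟨le_refl _, le_refl _⟩, le_refl _, zero_le_one⟩
    · exact ((convex_Icc _ _).prod (convex_Icc _ _)).isPreconnected
    · exact ((convex_Icc _ _).prod (convex_Icc _ _)).isPreconnected
  have hDlow : ∀ q ∈ D, (w q).re ≤ 0 := by
    rintro ⟨x, y⟩ (⟨hx, hy⟩ | ⟨hx, hy⟩)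
    · have hy0 : y = 0 := le_antisymm hy.2 hy.1
      rw [hw_re]
      simp only [hy0, hy₂0]
      have := (hy₁m x hx).1
      linarith
    · have hx1 : x = 1 := le_antisymm hx.2 hx.1
      rw [hw_re]
      simp only [hx1, hy₁1]
      have := (hy₂m y hy).2
      linarith
  have hFslit : ∀ q ∈ D, -F q ∈ Complex.slitPlane := by
    intro q hq
    by_cases him : (F q).im = 0
    · refine Complex.mem_slitPlane_iff.2 (Or.inl ?_)
      have hle : (F q).re ≤ 0 := by
        rw [hF_def]
        simp only [Complex.sub_re, Complex.one_re]
        rw [Complex.exp_re]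
        have h1 : Real.exp ((w q).re) ≤ 1 := Real.exp_le_one_iff.2 (hDlow q hq)
        have h2 : Real.exp ((w q).re) * Real.cos ((w q).im) ≤ Real.exp ((w q).re) * 1 :=
          mul_le_mul_of_nonneg_left (Real.cos_le_one _) (Real.exp_pos _).le
        linarith
      have hne : (F q).re ≠ 0 := by
        intro h
        exact hFne q (hDQ hq) (Complex.ext h him)
      simp only [Complex.neg_re]
      exact neg_pos.2 (lt_of_le_of_ne hle hne)
    · exact Complex.mem_slitPlane_iff.2 (Or.inr (by simpa using him))
  set vD : ℝ × ℝ → ℝ := fun q => (L q).im - (π + Complex.arg (-F q)) with hvD_def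
  have hvDc : ContinuousOn vD D := by
    apply ContinuousOn.sub
    · exact Complex.continuous_im.comp_continuousOn (hLc.mono hDQ)
    · apply ContinuousOn.add continuousOn_const
      intro q hq
      have h1 : ContinuousAt (fun x : ℝ × ℝ => -F x) q := (hFcont.neg).continuousAt
      have h2 : ContinuousAt Complex.arg (-F q) := Complex.continuousAt_arg (hFslit q hq)
      have h3 := ContinuousAt.comp (f := fun x : ℝ × ℝ => -F x) h2 h1
      exact h3.continuousWithinAt
  have hsplit : ∀ z : ℂ, Complex.exp z = (Real.exp z.re : ℂ) * Complex.exp ((z.im : ℂ) * I) := by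
    intro z
    conv_lhs => rw [← Complex.re_add_im z]
    rw [Complex.exp_add, ← Complex.ofReal_exp]
  have habs : ∀ q ∈ (Set.Icc (0:ℝ) 1) ×ˢ (Set.Icc (0:ℝ) 1),
      Real.exp ((L q).re) = ‖F q‖ := by
    intro q hq
    rw [← Complex.norm_exp, hLe q hq]
  have hvD_int : ∀ q ∈ D, ∃ n : ℤ, vD q = 2 * π * n := by
    intro q hq
    have hqQ := hDQ hq
    have hzne : F q ≠ 0 := hFne q hqQ
    have h1 : Complex.exp (L q) = F q := hLe q hqQ
    have h2 : -F q = (‖-F q‖ : ℂ) *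
        Complex.exp ((Complex.arg (-F q) : ℂ) * I) := (Complex.norm_mul_exp_arg_mul_I _).symm
    have h3 : ((‖F q‖ : ℝ) : ℂ) *
        Complex.exp (((π + Complex.arg (-F q) : ℝ) : ℂ) * I) = F q := by
      rw [show (((π + Complex.arg (-F q) : ℝ)) : ℂ) * I =
        (π : ℂ) * I + ((Complex.arg (-F q) : ℝ) : ℂ) * I by push_cast; ring]
      rw [Complex.exp_add, Complex.exp_pi_mul_I]
      have habsneg : ‖F q‖ = ‖-F q‖ := (norm_neg _).symm
      calc ((‖F q‖ : ℝ) : ℂ) * (-1 * Complex.exp (((Complex.arg (-F q) : ℝ)) * I))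
          = -(((‖-F q‖ : ℝ) : ℂ) *
              Complex.exp (((Complex.arg (-F q) : ℝ)) * I)) := by rw [habsneg]; ring
        _ = -(-F q) := by rw [Complex.norm_mul_exp_arg_mul_I]
        _ = F q := neg_neg _
    rw [hsplit (L q), habs q hqQ] at h1
    have h1' := h1.trans h3.symm
    have habsne : ((‖F q‖ : ℝ) : ℂ) ≠ 0 := by
      simpa [Complex.ofReal_eq_zero, AbsoluteValue.ne_zero_iff] using hzne
    have h4 : Complex.exp (((L q).im : ℂ) * I) =
        Complex.exp (((π + Complex.arg (-F q) : ℝ) : ℂ) * I) := by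
      apply mul_left_cancel₀ habsne
      rw [← h1']
    obtain ⟨n, hn⟩ := exp_real_eq h4
    exact ⟨n, by rw [hvD_def]; simp only; linarith⟩
  -- upper boundary
  set U : Set (ℝ × ℝ) :=
    (Set.Icc (0:ℝ) 0 ×ˢ Set.Icc (0:ℝ) 1) ∪ (Set.Icc (0:ℝ) 1 ×ˢ Set.Icc (1:ℝ) 1) with hU_def
  have hUQ : U ⊆ (Set.Icc (0:ℝ) 1) ×ˢ (Set.Icc (0:ℝ) 1) := by
    rintro ⟨x, y⟩ (⟨hx, hy⟩ | ⟨hx, hy⟩)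
    · exact ⟨⟨hx.1, le_trans hx.2 zero_le_one⟩, hy⟩
    · exact ⟨hx, le_trans zero_le_one hy.1, hy.2⟩
  have hUpre : IsPreconnected U := by
    apply IsPreconnected.union ((0:ℝ), (1:ℝ))
    · exact ⟨⟨le_refl _, le_refl _⟩, zero_le_one, le_refl _⟩
    · exact ⟨⟨le_refl _, zero_le_one⟩, le_refl _, le_refl _⟩
    · exact ((convex_Icc _ _).prod (convex_Icc _ _)).isPreconnected
    · exact ((convex_Icc _ _).prod (convex_Icc _ _)).isPreconnected
  have hUhigh : ∀ q ∈ U, 0 ≤ (w q).re := by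
    rintro ⟨x, y⟩ (⟨hx, hy⟩ | ⟨hx, hy⟩)
    · have hx0 : x = 0 := le_antisymm hx.2 hx.1
      rw [hw_re]
      simp only [hx0, hy₁0]
      have := (hy₂m y hy).1
      linarith
    · have hy1 : y = 1 := le_antisymm hy.2 hy.1
      rw [hw_re]
      simp only [hy1, hy₂1]
      have := (hy₁m x hx).2
      linarith
  set G : ℝ × ℝ → ℂ := fun q => 1 - Complex.exp (-(w q)) with hG_def
  have hGcont : Continuous G := continuous_const.sub (hwcont.neg.cexp)
  have hFG : ∀ q, F q = Complex.exp (w q) * G q := by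
    intro q
    rw [hF_def, hG_def]
    simp only
    rw [mul_sub, mul_one, ← Complex.exp_add]
    simp
  have hGne : ∀ q ∈ (Set.Icc (0:ℝ) 1) ×ˢ (Set.Icc (0:ℝ) 1), G q ≠ 0 := by
    intro q hq h
    apply hFne q hq
    rw [hFG q, h, mul_zero]
  have hGslit : ∀ q ∈ U, G q ∈ Complex.slitPlane := by
    intro q hq
    by_cases him : (G q).im = 0
    · refine Complex.mem_slitPlane_iff.2 (Or.inl ?_)
      have hle : 0 ≤ (G q).re := by
        rw [hG_def]
        simp only [Complex.sub_re, Complex.one_re]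
        rw [Complex.exp_re]
        simp only [Complex.neg_re, Complex.neg_im]
        rw [Real.cos_neg]
        have h1 : Real.exp (-(w q).re) ≤ 1 := Real.exp_le_one_iff.2 (by linarith [hUhigh q hq])
        have h2 : Real.exp (-(w q).re) * Real.cos ((w q).im) ≤ Real.exp (-(w q).re) * 1 :=
          mul_le_mul_of_nonneg_left (Real.cos_le_one _) (Real.exp_pos _).le
        linarith
      have hne : (G q).re ≠ 0 := by
        intro h
        exact hGne q (hUQ hq) (Complex.ext h him)
      exact lt_of_le_of_ne hle (Ne.symm hne)
    · exact Complex.mem_slitPlane_iff.2 (Or.inr him)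
  set vU : ℝ × ℝ → ℝ :=
    fun q => (L q).im - ((θ₂ q.2 - θ₁ q.1) + Complex.arg (G q)) with hvU_def
  have hvUc : ContinuousOn vU U := by
    apply ContinuousOn.sub
    · exact Complex.continuous_im.comp_continuousOn (hLc.mono hUQ)
    · apply ContinuousOn.add
      · exact ((hθ₂.comp continuous_snd).sub (hθ₁.comp continuous_fst)).continuousOn
      · intro q hq
        have h1 : ContinuousAt G q := hGcont.continuousAt
        have h2 : ContinuousAt Complex.arg (G q) := Complex.continuousAt_arg (hGslit q hq)
        exact (h2.comp h1).continuousWithinAt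
  have hvU_int : ∀ q ∈ U, ∃ n : ℤ, vU q = 2 * π * n := by
    intro q hq
    have hqQ := hUQ hq
    have h1 : Complex.exp (L q) = F q := hLe q hqQ
    have hGq : G q = (‖G q‖ : ℂ) *
        Complex.exp ((Complex.arg (G q) : ℂ) * I) := (Complex.norm_mul_exp_arg_mul_I _).symm
    have h3 : F q = ((Real.exp ((w q).re) * ‖G q‖ : ℝ) : ℂ) *
        Complex.exp ((((w q).im + Complex.arg (G q) : ℝ) : ℂ) * I) := by
      rw [hFG q, hsplit (w q)]
      conv_lhs => rw [hGq]
      rw [show ((((w q).im + Complex.arg (G q) : ℝ)) : ℂ) * I =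
        (((w q).im : ℝ) : ℂ) * I + ((Complex.arg (G q) : ℝ) : ℂ) * I by push_cast; ring]
      rw [Complex.exp_add]
      push_cast
      ring
    rw [hsplit (L q), habs q hqQ] at h1
    have hrgne : ((Real.exp ((w q).re) * ‖G q‖ : ℝ) : ℂ) ≠ 0 := by
      rw [Complex.ofReal_ne_zero]
      apply mul_ne_zero (Real.exp_ne_zero _)
      simpa [AbsoluteValue.ne_zero_iff] using hGne q hqQ
    have habs2 : ‖F q‖ = Real.exp ((w q).re) * ‖G q‖ := by
      rw [hFG q]
      rw [norm_mul, Complex.norm_exp]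
    rw [habs2] at h1
    have h1' := h1.trans h3
    have h4 : Complex.exp (((L q).im : ℂ) * I) =
        Complex.exp ((((w q).im + Complex.arg (G q) : ℝ) : ℂ) * I) := by
      apply mul_left_cancel₀ hrgne
      rw [← h1']
    obtain ⟨n, hn⟩ := exp_real_eq h4
    refine ⟨n, ?_⟩
    rw [hvU_def]
    simp only
    rw [← hw_im q]
    linarith
  -- combine the two constancy results
  have hq00D : ((0:ℝ), (0:ℝ)) ∈ D := Or.inl ⟨⟨le_refl _, zero_le_one⟩, le_refl _, le_refl _⟩
  have hq11D : ((1:ℝ), (1:ℝ)) ∈ D := Or.inr ⟨⟨le_refl _, le_refl _⟩, zero_le_one, le_refl _⟩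
  have hq00U : ((0:ℝ), (0:ℝ)) ∈ U := Or.inl ⟨⟨le_refl _, le_refl _⟩, le_refl _, zero_le_one⟩
  have hq11U : ((1:ℝ), (1:ℝ)) ∈ U := Or.inr ⟨⟨zero_le_one, le_refl _⟩, le_refl _, le_refl _⟩
  have hDconst : vD (0, 0) = vD (1, 1) := const_2pi_int hDpre hvDc hvD_int hq00D hq11D
  have hUconst : vU (0, 0) = vU (1, 1) := const_2pi_int hUpre hvUc hvU_int hq00U hq11U
  -- corner data
  set g0 : ℝ := θ₂ 0 - θ₁ 0 with hg0_def
  set g1 : ℝ := θ₂ 1 - θ₁ 1 with hg1_def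
  have hmem0 : (0:ℝ) ∈ Set.Icc (0:ℝ) 1 := ⟨le_refl _, zero_le_one⟩
  have hmem1 : (1:ℝ) ∈ Set.Icc (0:ℝ) 1 := ⟨zero_le_one, le_refl _⟩
  have hg0ne : ∀ n : ℤ, g0 ≠ 2 * π * n := by
    intro n h
    exact hdisj 0 hmem0 0 hmem0 ⟨by rw [hy₂0, hy₁0], ⟨n, h⟩⟩
  have hg1ne : ∀ n : ℤ, g1 ≠ 2 * π * n := by
    intro n h
    exact hdisj 1 hmem1 1 hmem1 ⟨by rw [hy₂1, hy₁1], ⟨n, h⟩⟩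
  have hw00 : w ((0:ℝ), (0:ℝ)) = (g0 : ℂ) * I := by
    rw [hw_def]
    simp only [hy₂0, hy₁0, hg0_def]
    push_cast
    ring
  have hw11 : w ((1:ℝ), (1:ℝ)) = (g1 : ℂ) * I := by
    rw [hw_def]
    simp only [hy₂1, hy₁1, hg1_def]
    push_cast
    ring
  have hcorner0 := corner_eq g0 hg0ne
  have hcorner1 := corner_eq g1 hg1ne
  -- translate corner data
  have hB0 : vU (0, 0) = (L (0, 0)).im - (g0 + Complex.arg (1 - Complex.exp (-((g0:ℂ) * I)))) := by
    rw [hvU_def]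
    simp only [hG_def]
    rw [hw00]
  have hB1 : vU (1, 1) = (L (1, 1)).im - (g1 + Complex.arg (1 - Complex.exp (-((g1:ℂ) * I)))) := by
    rw [hvU_def]
    simp only [hG_def]
    rw [hw11]
  have hA0 : vD (0, 0) = (L (0, 0)).im -
      (π + Complex.arg (-(Complex.exp ((g0:ℂ) * I) - 1))) := by
    rw [hvD_def]
    simp only [hF_def]
    rw [hw00]
  have hA1 : vD (1, 1) = (L (1, 1)).im -
      (π + Complex.arg (-(Complex.exp ((g1:ℂ) * I) - 1))) := by
    rw [hvD_def]
    simp only [hF_def]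
    rw [hw11]
  have hkey : 2 * π * (⌊g0 / (2 * π)⌋ : ℝ) = 2 * π * (⌊g1 / (2 * π)⌋ : ℝ) := by
    rw [hB0, hB1] at hUconst
    rw [hA0, hA1] at hDconst
    push_cast at hcorner0 hcorner1 ⊢
    linarith
  have : ((⌊g0 / (2 * π)⌋ : ℤ) : ℝ) = ((⌊g1 / (2 * π)⌋ : ℤ) : ℝ) :=
    mul_left_cancel₀ (ne_of_gt h2pi) hkey
  exact_mod_cast this

end AnnulusAux

/-- The `p` equally spaced points `exp(2πik/p)` on the unit circle in `ℂ`. -/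
noncomputable def annulusPt (p : ℕ) (i : Fin p) : ℂ :=
  Complex.exp (2 * Real.pi * Complex.I * i / p)

/-- If `p` pairwise disjoint injective arcs in the closed annulus `A = S¹ × [0,1]` join the
equally spaced point `b_i = (exp(2πii/p), 0)` of one boundary circle to the point
`c_{σ(i)} = (exp(2πiσ(i)/p), 1)` of the other, each arc meeting the boundary circles
exactly in its endpoints, then the bijection `σ` is a cyclic rotation `i ↦ i + c (mod p)`. -/
theorem annulus_arcs_rotation (p : ℕ) (hp : 1 ≤ p)
    (σ : Fin p → Fin p) (hσ : Function.Bijective σ)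
    (γ : Fin p → unitInterval → ℂ × ℝ)
    (hcont : ∀ i, Continuous (γ i))
    (hinj : ∀ i, Function.Injective (γ i))
    (hmem : ∀ i t, ‖(γ i t).1‖ = 1 ∧ (γ i t).2 ∈ Set.Icc (0 : ℝ) 1)
    (hbdry : ∀ i t, ((γ i t).2 = 0 ∨ (γ i t).2 = 1) ↔ (t = 0 ∨ t = 1))
    (hdisj : ∀ i j, i ≠ j → Disjoint (Set.range (γ i)) (Set.range (γ j)))
    (h0 : ∀ i, γ i 0 = (annulusPt p i, 0))
    (h1 : ∀ i, γ i 1 = (annulusPt p (σ i), 1)) :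
    ∃ c : ZMod p, ∀ i : Fin p, ((σ i : ℕ) : ZMod p) = ((i : ℕ) : ZMod p) + c := by
  classical
  have h2pi : (0:ℝ) < 2 * π := by positivity
  set prj : ℝ → unitInterval := Set.projIcc 0 1 zero_le_one with hprj_def
  have hprj_coe : ∀ t ∈ Set.Icc (0:ℝ) 1, ((prj t : ℝ)) = t := by
    intro t ht
    rw [hprj_def, Set.projIcc_of_mem zero_le_one ht]
  have hprj0 : prj 0 = 0 := by simp [hprj_def]
  have hprj1 : prj 1 = 1 := by simp [hprj_def]
  -- annulusPt as real-angle exponential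
  have hannulus : ∀ i : Fin p, annulusPt p i =
      Complex.exp (((2 * π * (i:ℕ) / p : ℝ) : ℂ) * I) := by
    intro i
    unfold annulusPt
    congr 1
    push_cast
    ring
  -- the angle lifts
  have lifts : ∀ i : Fin p, ∃ θ : ℝ → ℝ, Continuous θ ∧
      (∀ t ∈ Set.Icc (0:ℝ) 1, Complex.exp ((θ t : ℂ) * I) = (γ i (prj t)).1) ∧
      θ 0 = 2 * π * (i:ℕ) / p := by
    intro i
    have hXc : Continuous (fun t : ℝ => (γ i (prj t)).1) :=
      (continuous_fst.comp ((hcont i).comp continuous_projIcc))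
    have hXne : ∀ t ∈ Set.Icc (0:ℝ) 1, (γ i (prj t)).1 ≠ 0 := by
      intro t _
      intro h
      have := (hmem i (prj t)).1
      rw [h] at this
      simp at this
    obtain ⟨L, hLc, hLe⟩ := exists_clog_path _ hXc hXne
    have hre : ∀ t ∈ Set.Icc (0:ℝ) 1, (L t).re = 0 := by
      intro t ht
      have h1' : ‖Complex.exp (L t)‖ = 1 := by
        rw [hLe t ht]
        exact (hmem i (prj t)).1
      rw [Complex.norm_exp] at h1'
      rw [← Real.exp_zero] at h1'
      exact Real.exp_injective h1'
    have hexp : ∀ t ∈ Set.Icc (0:ℝ) 1,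
        Complex.exp (((L t).im : ℂ) * I) = (γ i (prj t)).1 := by
      intro t ht
      rw [← hLe t ht]
      conv_rhs => rw [← Complex.re_add_im (L t)]
      rw [hre t ht]
      simp
    -- normalize at 0
    have h00 : Complex.exp (((L 0).im : ℂ) * I) =
        Complex.exp (((2 * π * (i:ℕ) / p : ℝ) : ℂ) * I) := by
      rw [hexp 0 ⟨le_refl _, zero_le_one⟩, hprj0, h0 i]
      exact hannulus i
    obtain ⟨n, hn⟩ := exp_real_eq h00
    refine ⟨fun t => (L (↑(prj t)) : ℂ).im - 2 * π * n, ?_, ?_, ?_⟩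
    · apply Continuous.sub _ continuous_const
      apply Complex.continuous_im.comp
      exact hLc.comp_continuous (continuous_subtype_val.comp continuous_projIcc)
        (fun t => (prj t).2)
    · intro t ht
      have hpt : ((prj t : ℝ)) = t := hprj_coe t ht
      show Complex.exp ((((L (↑(prj t))).im - 2 * π * n : ℝ) : ℂ) * I) = (γ i (prj t)).1
      rw [hpt]
      have : ((((L t).im - 2 * π * n : ℝ)) : ℂ) * I =
          ((L t).im : ℂ) * I + ((-n : ℤ) : ℂ) * (2 * π * I) := by push_cast; ring
      rw [this, Complex.exp_add, Complex.exp_int_mul_two_pi_mul_I, mul_one]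
      exact hexp t ht
    · show (L (↑(prj 0))).im - 2 * π * n = 2 * π * (i:ℕ) / p
      have hpt : ((prj 0 : ℝ)) = 0 := hprj_coe 0 ⟨le_refl _, zero_le_one⟩
      rw [hpt]
      linarith [hn]
  choose θf hθc hθe hθ0 using lifts
  -- winding integers
  have hwind : ∀ i : Fin p, ∃ k : ℤ, θf i 1 = 2 * π * ((σ i : ℕ)) / p + 2 * π * k := by
    intro i
    have h11 : Complex.exp ((θf i 1 : ℂ) * I) =
        Complex.exp (((2 * π * ((σ i : ℕ)) / p : ℝ) : ℂ) * I) := by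
      rw [hθe i 1 ⟨zero_le_one, le_refl _⟩, hprj1, h1 i]
      exact hannulus (σ i)
    obtain ⟨n, hn⟩ := exp_real_eq h11
    exact ⟨n, by linarith [hn]⟩
  choose kk hkk using hwind
  -- the floor equality from the topological core
  have floorEq : ∀ i j : Fin p, i ≠ j →
      ⌊(θf j 0 - θf i 0) / (2 * π)⌋ = ⌊(θf j 1 - θf i 1) / (2 * π)⌋ := by
    intro i j hij
    apply core_floor (θf i) (θf j)
      (fun t => (γ i (prj t)).2) (fun t => (γ j (prj t)).2)
      (hθc i) (hθc j)
      (continuous_snd.comp ((hcont i).comp continuous_projIcc))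
      (continuous_snd.comp ((hcont j).comp continuous_projIcc))
      (fun t _ => (hmem i (prj t)).2) (fun t _ => (hmem j (prj t)).2)
      (show (γ i (prj 0)).2 = 0 by rw [hprj0, h0 i])
      (show (γ i (prj 1)).2 = 1 by rw [hprj1, h1 i])
      (show (γ j (prj 0)).2 = 0 by rw [hprj0, h0 j])
      (show (γ j (prj 1)).2 = 1 by rw [hprj1, h1 j])
    intro t ht s hs ⟨hy, n, hθ⟩
    have hX : (γ j (prj s)).1 = (γ i (prj t)).1 := by
      rw [← hθe j s hs, ← hθe i t ht]
      have : ((θf j s : ℝ) : ℂ) * I = ((θf i t : ℝ) : ℂ) * I + (n : ℂ) * (2 * π * I) := by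
        have : θf j s = θf i t + 2 * π * n := by linarith [hθ]
        rw [this]; push_cast; ring
      rw [this, Complex.exp_add, Complex.exp_int_mul_two_pi_mul_I, mul_one]
    have hpoint : γ j (prj s) = γ i (prj t) := Prod.ext hX hy
    exact Set.disjoint_left.mp (hdisj i j hij) ⟨prj t, rfl⟩ ⟨prj s, hpoint⟩
  -- rewrite the floors arithmetically
  have hppos : (0:ℝ) < p := by exact_mod_cast hp
  have star : ∀ i j : Fin p, (i:ℕ) < (j:ℕ) →
      (if (i:ℕ) < (j:ℕ) then (0:ℤ) else -1) =
      (if ((σ i):ℕ) < ((σ j):ℕ) then (0:ℤ) else -1) + (kk j - kk i) := by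
    intro i j hij
    have hne : i ≠ j := by intro h; rw [h] at hij; omega
    have h1' := floorEq i j hne
    have e0 : (θf j 0 - θf i 0) / (2 * π) = (((j:ℕ):ℝ) - ((i:ℕ):ℝ)) / p := by
      rw [hθ0 i, hθ0 j]
      field_simp
    have e1 : (θf j 1 - θf i 1) / (2 * π) =
        ((((σ j):ℕ):ℝ) - (((σ i):ℕ):ℝ)) / p + ((kk j - kk i : ℤ) : ℝ) := by
      rw [hkk i, hkk j]
      field_simp
      push_cast; ring
    rw [e0, e1] at h1'
    rw [Int.floor_add_intCast] at h1'
    have hσne : ((σ i):ℕ) ≠ ((σ j):ℕ) := by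
      intro h
      exact hne (hσ.injective (Fin.ext h))
    rw [floor_nat_div i.isLt j.isLt (by omega), floor_nat_div (σ i).isLt (σ j).isLt hσne] at h1'
    exact h1'
  -- the integer sequence
  set N : Fin p → ℤ := fun i => ((σ i : ℕ) : ℤ) + p * kk i with hN_def
  have hpair : ∀ i j : Fin p, (i:ℕ) < (j:ℕ) → 1 ≤ N j - N i ∧ N j - N i ≤ (p:ℤ) - 1 := by
    intro i j hij
    have hs := star i j hij
    rw [if_pos hij] at hs
    have hσne : ((σ i):ℕ) ≠ ((σ j):ℕ) := by
      intro h
      have : i = j := hσ.injective (Fin.ext h)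
      omega
    have hlt1 := (σ i).isLt
    have hlt2 := (σ j).isLt
    by_cases hlt : ((σ i):ℕ) < ((σ j):ℕ)
    · rw [if_pos hlt] at hs
      have hk : kk j = kk i := by omega
      have hNd : N j - N i = (((σ j):ℕ):ℤ) - (((σ i):ℕ):ℤ) := by
        rw [hN_def]
        simp only
        rw [hk]
        ring
      omega
    · rw [if_neg hlt] at hs
      have hk : kk j = kk i + 1 := by omega
      have hNd : N j - N i = (((σ j):ℕ):ℤ) - (((σ i):ℕ):ℤ) + p := by
        rw [hN_def]
        simp only
        rw [hk]
        ring
      omega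
  set i₀ : Fin p := ⟨0, hp⟩ with hi0_def
  have gen : ∀ (d : ℕ) (i j : Fin p), (j:ℕ) = (i:ℕ) + d → N i + d ≤ N j := by
    intro d
    induction d with
    | zero =>
      intro i j h
      have : i = j := Fin.ext (by omega)
      subst this
      simp
    | succ d ih =>
      intro i j h
      have hj' : (i:ℕ) + d < p := by have := j.isLt; omega
      have h1' := ih i ⟨(i:ℕ) + d, hj'⟩ rfl
      have h2' := (hpair ⟨(i:ℕ) + d, hj'⟩ j (by simp; omega)).1
      push_cast at h1' ⊢
      omega
  have hlastlt : p - 1 < p := by omega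
  have hub : ∀ i : Fin p, N i + ((p - 1) - (i:ℕ) : ℕ) ≤ N ⟨p - 1, hlastlt⟩ := by
    intro i
    apply gen _ i ⟨p - 1, hlastlt⟩
    have := i.isLt
    simp
    omega
  have hlast : N ⟨p - 1, hlastlt⟩ ≤ N i₀ + ((p:ℤ) - 1) := by
    by_cases hp1 : 1 < p
    · have := (hpair i₀ ⟨p - 1, hlastlt⟩ (by simp [hi0_def]; omega)).2
      omega
    · have hpe : p = 1 := by omega
      have : (⟨p - 1, hlastlt⟩ : Fin p) = i₀ := Fin.ext (by simp [hi0_def]; omega)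
      rw [this]
      subst hpe
      simp
  have hlb : ∀ i : Fin p, N i₀ + (i:ℕ) ≤ N i := by
    intro i
    apply gen _ i₀ i
    simp [hi0_def]
  have hNi : ∀ i : Fin p, N i = N i₀ + (i:ℕ) := by
    intro i
    have h1' := hlb i
    have h2' := hub i
    have h3' := hlast
    have h4' := i.isLt
    omega
  -- conclusion
  refine ⟨(((σ i₀ : ℕ) : ZMod p)), ?_⟩
  intro i
  have hZ : ((σ i : ℕ) : ℤ) + p * kk i = ((σ i₀ : ℕ) : ℤ) + p * kk i₀ + (i:ℕ) := by
    have := hNi i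
    rw [hN_def] at this
    simpa using this
  have hcast := congrArg (fun z : ℤ => (z : ZMod p)) hZ
  push_cast at hcast
  simpa [ZMod.natCast_self, add_comm] using hcast
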